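/- Let V₁, V₂ be finite-dimensional real vector spaces, ρ₁ : SO(3) → GL(V₁) and ρ₂ : SO(3) → GL(V₂) group homomorphisms, μ a Borel measure on S² invariant under the SO(3) action, κ : S² → Hom(V₁,V₂) continuous, and f : S² → V₁ continuous. Define the convolution (κ ⋆ f) : SO(3) → V₂ by (κ ⋆ f)(R) = ∫_{S²} ρ₂(R) κ(R⁻¹x) ρ₁(R)⁻¹ f(x) dμ(x). Then this convolution is equivariant: for every S ∈ SO(3) and every R ∈ SO(3), (κ ⋆ (π₁(S)f))(R) = ρ₂(S)·(κ ⋆ f)(S⁻¹R), where [π₁(S)f](x) = ρ₁(S) f(S⁻¹x). -/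

import Mathlib

open Matrix MeasureTheory

noncomputable section

/-- `SO(n)`: the group of `n×n` real orthogonal matrices with determinant `1`, as a subgroup
of the orthogonal group. -/
def SO (n : ℕ) : Subgroup (Matrix.orthogonalGroup (Fin n) ℝ) where
  carrier := {R | (R : Matrix (Fin n) (Fin n) ℝ).det = 1}
  one_mem' := by simp
  mul_mem' := by
    intro a b ha hb
    simp only [Set.mem_setOf_eq, Matrix.UnitaryGroup.mul_val, Matrix.det_mul] at *
    rw [ha, hb, mul_one]
  inv_mem' := by
    intro a ha
    simp only [Set.mem_setOf_eq, Matrix.UnitaryGroup.inv_val] at *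
    rw [Matrix.star_eq_conjTranspose, Matrix.conjTranspose_eq_transpose_of_trivial,
      Matrix.det_transpose]
    exact ha

/-- The matrix underlying an element of `SO(n)`. -/
def SO.mat {n : ℕ} (R : SO n) : Matrix (Fin n) (Fin n) ℝ := R.1.1

/-- The unit sphere `S²` in three-dimensional Euclidean space. -/
abbrev Sphere2 : Type := Metric.sphere (0 : EuclideanSpace ℝ (Fin 3)) 1

theorem norm_mulVec (R : SO 3) (x : EuclideanSpace ℝ (Fin 3)) :
    ‖(show EuclideanSpace ℝ (Fin 3) from WithLp.toLp 2 ((SO.mat R).mulVec x))‖ = ‖x‖ := by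
  have horth : star (SO.mat R) * SO.mat R = 1 := R.1.2.1
  have h : (SO.mat R)ᵀ * SO.mat R = 1 := by
    rwa [Matrix.star_eq_conjTranspose, Matrix.conjTranspose_eq_transpose_of_trivial] at horth
  rw [EuclideanSpace.norm_eq, EuclideanSpace.norm_eq]
  congr 1
  try simp only [WithLp.ofLp_toLp]
  have hd : ∀ (w : Fin 3 → ℝ), (∑ i, ‖w i‖ ^ 2) = w ⬝ᵥ w := by
    intro w
    simp [dotProduct, Real.norm_eq_abs, sq_abs, pow_two]
  rw [hd ((SO.mat R).mulVec x), hd x]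
  rw [Matrix.dotProduct_mulVec]
  congr 1
  calc ((SO.mat R).mulVec x) ᵥ* SO.mat R = (SO.mat R)ᵀ *ᵥ ((SO.mat R) *ᵥ x) := by
        rw [Matrix.mulVec_transpose]
  _ = ((SO.mat R)ᵀ * SO.mat R) *ᵥ x := by rw [Matrix.mulVec_mulVec]
  _ = x := by rw [h, Matrix.one_mulVec]

/-- The action of `SO(3)` on the unit sphere `S²` by matrix-vector multiplication. -/
def SO.act (R : SO 3) (x : Sphere2) : Sphere2 :=
  ⟨WithLp.toLp 2 ((SO.mat R).mulVec x), by
    rw [mem_sphere_zero_iff_norm]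
    exact (norm_mulVec R x).trans (mem_sphere_zero_iff_norm.mp x.2)⟩

variable {V₁ V₂ : Type*}
  [NormedAddCommGroup V₁] [NormedSpace ℝ V₁] [FiniteDimensional ℝ V₁]
  [NormedAddCommGroup V₂] [NormedSpace ℝ V₂] [FiniteDimensional ℝ V₂]

/-- The spherical convolution `(κ ⋆ f)(R) = ∫_{S²} ρ₂(R) κ(R⁻¹x) ρ₁(R)⁻¹ f(x) dμ(x)` of a
kernel `κ : S² → Hom(V₁,V₂)` with a feature map `f : S² → V₁`, producing a function on
`SO(3)`. -/
def sphereConv (ρ₁ : SO 3 →* LinearMap.GeneralLinearGroup ℝ V₁)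
    (ρ₂ : SO 3 →* LinearMap.GeneralLinearGroup ℝ V₂) (μ : Measure Sphere2)
    (κ : Sphere2 → (V₁ →ₗ[ℝ] V₂)) (f : Sphere2 → V₁) (R : SO 3) : V₂ :=
  ∫ x, (ρ₂ R : V₂ →ₗ[ℝ] V₂) (κ (SO.act R⁻¹ x) ((↑(ρ₁ R)⁻¹ : V₁ →ₗ[ℝ] V₁) (f x))) ∂μ

lemma SO.act_mul (a b : SO 3) (x : Sphere2) : SO.act (a * b) x = SO.act a (SO.act b x) := by
  apply Subtype.ext
  show WithLp.toLp 2 ((SO.mat (a * b)).mulVec x) = WithLp.toLp 2 ((SO.mat a).mulVec ((SO.mat b).mulVec x))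
  rw [Matrix.mulVec_mulVec]
  rfl

lemma SO.act_one (x : Sphere2) : SO.act 1 x = x := by
  apply Subtype.ext
  show WithLp.toLp 2 ((SO.mat 1).mulVec x) = (x : EuclideanSpace ℝ (Fin 3))
  have : SO.mat 1 = (1 : Matrix (Fin 3) (Fin 3) ℝ) := rfl
  rw [this, Matrix.one_mulVec]

lemma SO.act_inv_act (a : SO 3) (x : Sphere2) : SO.act a⁻¹ (SO.act a x) = x := by
  rw [← SO.act_mul, inv_mul_cancel, SO.act_one]

lemma SO.act_continuous (R : SO 3) : Continuous (SO.act R) := by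
  apply Continuous.subtype_mk
  have : Continuous fun v : EuclideanSpace ℝ (Fin 3) =>
      Matrix.toEuclideanLin (SO.mat R) v :=
    LinearMap.continuous_of_finiteDimensional _
  exact this.comp continuous_subtype_val

lemma apply_continuous_aux {X : Type*} [TopologicalSpace X]
    (κ : X → (V₁ →ₗ[ℝ] V₂)) (hκ : Continuous fun x => ⇑(κ x))
    (v : X → V₁) (hv : Continuous v) : Continuous fun x => κ x (v x) := by
  let b := Module.finBasis ℝ V₁
  have h : ∀ x, κ x (v x) = ∑ i, b.repr (v x) i • κ x (b i) := by
    intro x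
    conv_lhs => rw [← b.sum_repr (v x)]
    rw [map_sum]
    simp
  simp only [h]
  apply continuous_finset_sum
  intro i _
  apply Continuous.smul
  · have : Continuous fun w : V₁ => b.repr w i := by
      have := LinearMap.continuous_of_finiteDimensional (b.coord i)
      exact this
    exact this.comp hv
  · exact (continuous_apply (b i)).comp hκ

/-- Equivariance of the spherical convolution with `𝒳 = S²` and `𝒴 = SO(3)`: for an
`SO(3)`-invariant Borel measure `μ` on `S²`, a continuous kernel `κ` and a continuous feature
map `f`, one has `(κ ⋆ (π₁(S)f))(R) = ρ₂(S)·(κ ⋆ f)(S⁻¹R)`, where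
`[π₁(S)f](x) = ρ₁(S) f(S⁻¹x)`. -/
theorem sphereConv_equivariant
    (ρ₁ : SO 3 →* LinearMap.GeneralLinearGroup ℝ V₁)
    (ρ₂ : SO 3 →* LinearMap.GeneralLinearGroup ℝ V₂)
    (μ : Measure Sphere2) (hμ : ∀ R : SO 3, μ.map (SO.act R) = μ)
    (κ : Sphere2 → (V₁ →ₗ[ℝ] V₂)) (hκ : Continuous fun x => ⇑(κ x))
    (f : Sphere2 → V₁) (hf : Continuous f) (S R : SO 3) :
    sphereConv ρ₁ ρ₂ μ κ
        (fun x => (ρ₁ S : V₁ →ₗ[ℝ] V₁) (f (SO.act S⁻¹ x))) R =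
      (ρ₂ S : V₂ →ₗ[ℝ] V₂) (sphereConv ρ₁ ρ₂ μ κ f (S⁻¹ * R)) := by
  classical
  -- continuous linear equiv corresponding to ρ₂ S
  let e : V₂ ≃L[ℝ] V₂ :=
    LinearEquiv.toContinuousLinearEquiv
      (LinearMap.GeneralLinearGroup.generalLinearEquiv ℝ V₂ (ρ₂ S))
  have he : ∀ v : V₂, e v = (ρ₂ S : V₂ →ₗ[ℝ] V₂) v := fun v => rfl
  -- integrands
  set G : Sphere2 → V₂ := fun y =>
    (ρ₂ (S⁻¹ * R) : V₂ →ₗ[ℝ] V₂)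
      (κ (SO.act (S⁻¹ * R)⁻¹ y) ((↑(ρ₁ (S⁻¹ * R))⁻¹ : V₁ →ₗ[ℝ] V₁) (f y))) with hGdef
  set H : Sphere2 → V₂ := fun x =>
    (ρ₂ R : V₂ →ₗ[ℝ] V₂)
      (κ (SO.act R⁻¹ x)
        ((↑(ρ₁ R)⁻¹ : V₁ →ₗ[ℝ] V₁) ((ρ₁ S : V₁ →ₗ[ℝ] V₁) (f (SO.act S⁻¹ x))))) with hHdef
  have hHcont : Continuous H := by
    apply (LinearMap.continuous_of_finiteDimensional
      (ρ₂ R : V₂ →ₗ[ℝ] V₂)).comp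
    apply apply_continuous_aux
    · exact hκ.comp (SO.act_continuous _)
    · exact (LinearMap.continuous_of_finiteDimensional
        (↑(ρ₁ R)⁻¹ : V₁ →ₗ[ℝ] V₁)).comp
        ((LinearMap.continuous_of_finiteDimensional (ρ₁ S : V₁ →ₗ[ℝ] V₁)).comp
          (hf.comp (SO.act_continuous _)))
  -- pointwise identity
  have hpt : ∀ y : Sphere2, H (SO.act S y) = e (G y) := by
    intro y
    have hact : SO.act R⁻¹ (SO.act S y) = SO.act (S⁻¹ * R)⁻¹ y := by
      rw [← SO.act_mul]
      congr 1
      group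
    have h2 : ∀ v : V₂, (ρ₂ R : V₂ →ₗ[ℝ] V₂) v
        = (ρ₂ S : V₂ →ₗ[ℝ] V₂) ((ρ₂ (S⁻¹ * R) : V₂ →ₗ[ℝ] V₂) v) := by
      intro v
      have : ρ₂ R = ρ₂ S * ρ₂ (S⁻¹ * R) := by rw [← MonoidHom.map_mul ρ₂]; congr 1; group
      rw [this]
      rfl
    have h1 : ∀ w : V₁, (↑(ρ₁ R)⁻¹ : V₁ →ₗ[ℝ] V₁) ((ρ₁ S : V₁ →ₗ[ℝ] V₁) w)
        = (↑(ρ₁ (S⁻¹ * R))⁻¹ : V₁ →ₗ[ℝ] V₁) w := by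
      intro w
      have : (ρ₁ (S⁻¹ * R))⁻¹ = (ρ₁ R)⁻¹ * ρ₁ S := by
        simp only [← MonoidHom.map_inv ρ₁, ← MonoidHom.map_mul ρ₁]
        congr 1
        group
      rw [this]
      rfl
    simp only [he, hHdef, hGdef]
    rw [SO.act_inv_act, hact, h1, h2]
  -- now compute
  show (∫ x, H x ∂μ) = (ρ₂ S : V₂ →ₗ[ℝ] V₂) (∫ y, G y ∂μ)
  have hμS : μ.map (SO.act S) = μ := hμ S
  calc (∫ x, H x ∂μ) = ∫ x, H x ∂(μ.map (SO.act S)) := by rw [hμS]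
    _ = ∫ y, H (SO.act S y) ∂μ := by
        rw [integral_map (SO.act_continuous S).aemeasurable
          (by rw [hμS]; exact hHcont.aestronglyMeasurable)]
    _ = ∫ y, e (G y) ∂μ := by simp only [hpt]
    _ = e (∫ y, G y ∂μ) := ContinuousLinearEquiv.integral_comp_comm e G
    _ = (ρ₂ S : V₂ →ₗ[ℝ] V₂) (∫ y, G y ∂μ) := he _

end
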